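/- arXiv:1510.02565 — 4 statements merged into one kernel-verified Lean document; each statement's English description precedes it below -/
import Mathlib

section
/- Let a,b ∈ [0,1] with b ≠ 1. Then the operator T has a unique fixed point in [0,1]²: if a = b, the unique fixed point is (a/(1+a), a/(1+a)); if a ≠ b, the unique fixed point is (x_*, x_*) where x_* = (1−b+2a−√((1−b)²+4a)) / (2(a−b)), and x_* ∈ [0,1]. -/
/-- The symmetric evolution operator `T(x,y) = ((1−y)(a+(b−a)x), (1−x)(a+(b−a)y))`. -/
def opT (a b : ℝ) (p : ℝ × ℝ) : ℝ × ℝ :=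
  ((1 - p.2) * (a + (b - a) * p.1), (1 - p.1) * (a + (b - a) * p.2))

/-- For `b ≠ 1` the symmetric operator `T` has a unique fixed point in `[0,1]²`:
`(a/(1+a), a/(1+a))` if `a = b`, and `(x₀, x₀)` with
`x₀ = (1−b+2a−√((1−b)²+4a))/(2(a−b))` if `a ≠ b`. -/
theorem fix_opT_sym_unique (a b : ℝ) (ha : a ∈ Set.Icc (0 : ℝ) 1)
    (hb : b ∈ Set.Icc (0 : ℝ) 1) (hb1 : b ≠ 1) :
    (a = b →
      {p : ℝ × ℝ | p ∈ Set.Icc (0 : ℝ) 1 ×ˢ Set.Icc (0 : ℝ) 1 ∧ opT a b p = p} =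
        {(a / (1 + a), a / (1 + a))}) ∧
    (a ≠ b →
      (1 - b + 2 * a - Real.sqrt ((1 - b) ^ 2 + 4 * a)) / (2 * (a - b)) ∈
          Set.Icc (0 : ℝ) 1 ∧
      {p : ℝ × ℝ | p ∈ Set.Icc (0 : ℝ) 1 ×ˢ Set.Icc (0 : ℝ) 1 ∧ opT a b p = p} =
        {((1 - b + 2 * a - Real.sqrt ((1 - b) ^ 2 + 4 * a)) / (2 * (a - b)),
          (1 - b + 2 * a - Real.sqrt ((1 - b) ^ 2 + 4 * a)) / (2 * (a - b)))}) := by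
  obtain ⟨ha0, ha1⟩ := ha
  obtain ⟨hb0, hb1'⟩ := hb
  have hblt : b < 1 := lt_of_le_of_ne hb1' hb1
  constructor
  · -- a = b case
    intro hab
    subst hab
    have hpos : (0:ℝ) < 1 + a := by linarith
    ext ⟨x, y⟩
    simp only [Set.mem_setOf_eq, Set.mem_singleton_iff, Set.mem_prod, Set.mem_Icc, opT,
      Prod.mk.injEq]
    constructor
    · rintro ⟨⟨⟨hx0, hx1⟩, ⟨hy0, hy1⟩⟩, h1, h2⟩
      have h3 : (1 - a) * (x - y) = 0 := by linear_combination h2 - h1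
      have hxy : x = y := by
        rcases mul_eq_zero.mp h3 with h | h
        · exfalso; linarith
        · linarith
      subst hxy
      have hx : x = a / (1 + a) := by
        rw [eq_div_iff (ne_of_gt hpos)]
        nlinarith [h1]
      exact ⟨hx, hx⟩
    · rintro ⟨hx, hy⟩
      subst hx; subst hy
      have h01 : (0:ℝ) ≤ a / (1 + a) := div_nonneg ha0 (le_of_lt hpos)
      have h02 : a / (1 + a) ≤ 1 := by
        rw [div_le_one hpos]; linarith
      refine ⟨⟨⟨h01, h02⟩, ⟨h01, h02⟩⟩, ?_, ?_⟩ <;> (field_simp; try ring)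
  · -- a ≠ b case
    intro hab
    set s := Real.sqrt ((1 - b) ^ 2 + 4 * a) with hs_def
    have hD : (0:ℝ) ≤ (1 - b) ^ 2 + 4 * a := by nlinarith
    have hs2 : s ^ 2 = (1 - b) ^ 2 + 4 * a := Real.sq_sqrt hD
    have hs0 : 0 ≤ s := Real.sqrt_nonneg _
    have hsgt : 0 < s := by nlinarith [hs2]
    set x₀ := (1 - b + 2 * a - s) / (2 * (a - b)) with hx0_def
    have hab' : a - b ≠ 0 := sub_ne_zero.mpr hab
    have he : x₀ * (2 * (a - b)) = 1 - b + 2 * a - s := by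
      rw [hx0_def, div_mul_cancel₀]
      simp [hab']
    have hmem : x₀ ∈ Set.Icc (0:ℝ) 1 := by
      rcases lt_or_gt_of_ne hab with h | h
      · -- a < b : numerator ≤ 0, denominator < 0
        have hd : 2 * (a - b) < 0 := by linarith
        have hnum : 1 - b + 2 * a ≤ s := by
          nlinarith [hs2, hs0, mul_nonneg ha0 (by linarith : (0:ℝ) ≤ b - a)]
        have hnum2 : s ≤ 1 + b := by
          nlinarith [hs2, hs0]
        constructor
        · rw [hx0_def, le_div_iff_of_neg hd]; linarith
        · rw [hx0_def, div_le_iff_of_neg hd]; linarith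
      · -- a > b : numerator ≥ 0, denominator > 0
        have hd : 0 < 2 * (a - b) := by linarith
        have hnum : s ≤ 1 - b + 2 * a := by
          nlinarith [hs2, hs0, mul_nonneg ha0 (by linarith : (0:ℝ) ≤ a - b)]
        have hnum2 : 1 + b ≤ s := by
          nlinarith [hs2, hs0]
        constructor
        · rw [hx0_def]; exact div_nonneg (by linarith) (le_of_lt hd)
        · rw [hx0_def, div_le_one hd]; linarith
    -- x₀ satisfies the quadratic
    have hq0 : (b - a) * x₀ ^ 2 + (1 - b + 2 * a) * x₀ - a = 0 := by
      have h4 : (2 * (a - b)) ^ 2 ≠ 0 := by positivity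
      have key : ((b - a) * x₀ ^ 2 + (1 - b + 2 * a) * x₀ - a) * (2 * (a - b)) ^ 2 = 0 := by
        linear_combination ((b - a) * (x₀ * (2 * (a - b)) + (1 - b + 2 * a - s))
          + (1 - b + 2 * a) * (2 * (a - b))) * he + (b - a) * hs2
      exact (mul_eq_zero.mp key).resolve_right h4
    refine ⟨hmem, ?_⟩
    ext ⟨x, y⟩
    simp only [Set.mem_setOf_eq, Set.mem_singleton_iff, Set.mem_prod, Set.mem_Icc, opT,
      Prod.mk.injEq]
    constructor
    · rintro ⟨⟨⟨hx0, hx1⟩, ⟨hy0, hy1⟩⟩, h1, h2⟩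
      have h3 : (1 - b) * (x - y) = 0 := by linear_combination h2 - h1
      have hxy : y = x := by
        rcases mul_eq_zero.mp h3 with h | h
        · exfalso; linarith
        · linarith
      subst hxy
      have hq : (b - a) * y ^ 2 + (1 - b + 2 * a) * y - a = 0 := by
        linear_combination -h1
      have hfac : (y - x₀) * ((b - a) * (y + x₀) + (1 - b + 2 * a)) = 0 := by
        linear_combination hq - hq0
      rcases mul_eq_zero.mp hfac with h | h
      · have : y = x₀ := by linarith [sub_eq_zero.mp h]
        exact ⟨this, this⟩
      · exfalso
        have hx' : (b - a) * y * 2 = -(1 - b + 2 * a + s) := by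
          linear_combination 2 * h + he
        rcases lt_or_gt_of_ne hab with hlt | hgt
        · -- a < b : would give y < 0
          nlinarith [hx', hsgt, mul_nonneg hy0 (by linarith : (0:ℝ) ≤ b - a)]
        · -- a > b : would give y > 1
          nlinarith [hx', hsgt,
            mul_nonneg (by linarith : (0:ℝ) ≤ 1 - y) (by linarith : (0:ℝ) ≤ a - b)]
    · rintro ⟨hx, hy⟩
      subst hx; subst hy
      obtain ⟨hm0, hm1⟩ := hmem
      refine ⟨⟨⟨hm0, hm1⟩, ⟨hm0, hm1⟩⟩, ?_, ?_⟩ <;> linear_combination -hq0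
end

section
/- Let (x^{(n)}, y^{(n)}) = T^n(x^{(0)}, y^{(0)}) be the trajectory of a point (x^{(0)},y^{(0)}) ∈ [0,1]² under the symmetric operator T. Then: (1) x^{(n+1)} − y^{(n+1)} = b (x^{(n)} − y^{(n)}) for all n ≥ 0; (2) if b = 1 then x^{(n)} − y^{(n)} = x^{(0)} − y^{(0)} for all n; (3) if b ≠ 1 then lim_{n→∞} (x^{(n)} − y^{(n)}) = 0. -/
open Filter Topology

lemma opT_diff (a b : ℝ) (q : ℝ × ℝ) :
    (opT a b q).1 - (opT a b q).2 = b * (q.1 - q.2) := by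
  simp only [opT]; ring

lemma opT_diff_pow (a b : ℝ) (p : ℝ × ℝ) (n : ℕ) :
    ((opT a b)^[n] p).1 - ((opT a b)^[n] p).2 = b ^ n * (p.1 - p.2) := by
  induction n with
  | zero => simp
  | succ n ih =>
      rw [Function.iterate_succ_apply', opT_diff, ih, pow_succ]
      ring

/-- Along any trajectory of the symmetric operator `T`:
`x^{(n+1)} − y^{(n+1)} = b(x^{(n)} − y^{(n)})`; if `b = 1` the difference is constant;
if `b ≠ 1` the difference tends to `0`. -/
theorem opT_sym_difference (a b : ℝ) (ha : a ∈ Set.Icc (0 : ℝ) 1)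
    (hb : b ∈ Set.Icc (0 : ℝ) 1) (p : ℝ × ℝ)
    (hp : p ∈ Set.Icc (0 : ℝ) 1 ×ˢ Set.Icc (0 : ℝ) 1) :
    (∀ n : ℕ,
      ((opT a b)^[n + 1] p).1 - ((opT a b)^[n + 1] p).2 =
        b * (((opT a b)^[n] p).1 - ((opT a b)^[n] p).2)) ∧
    (b = 1 → ∀ n : ℕ, ((opT a b)^[n] p).1 - ((opT a b)^[n] p).2 = p.1 - p.2) ∧
    (b ≠ 1 →
      Tendsto (fun n : ℕ => ((opT a b)^[n] p).1 - ((opT a b)^[n] p).2) atTop (𝓝 0)) := by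
  refine ⟨fun n => ?_, fun hb1 n => ?_, fun hb1 => ?_⟩
  · rw [Function.iterate_succ_apply', opT_diff]
  · rw [opT_diff_pow, hb1, one_pow, one_mul]
  · have hblt : b < 1 := lt_of_le_of_ne hb.2 hb1
    have h : Tendsto (fun n : ℕ => b ^ n * (p.1 - p.2)) atTop (𝓝 (0 * (p.1 - p.2))) :=
      (tendsto_pow_atTop_nhds_zero_of_lt_one hb.1 hblt).mul_const _
    rw [zero_mul] at h
    exact h.congr fun n => (opT_diff_pow a b p n).symm
end

section
/- If a = b and 0 ≤ a < 1, then for every initial point (x^{(0)},y^{(0)}) ∈ [0,1]² the trajectory under the symmetric operator T converges: lim_{n→∞} (x^{(n)}, y^{(n)}) = (a/(1+a), a/(1+a)). -/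
open Filter Topology

lemma opT_dist_eq (a : ℝ) (ha0 : 0 ≤ a) (ha1 : a < 1) (x : ℝ × ℝ) :
    dist (opT a a x) (a / (1 + a), a / (1 + a)) = a * dist x (a / (1 + a), a / (1 + a)) := by
  have h1a : (1 : ℝ) + a ≠ 0 := by linarith
  have key : ∀ s t : ℝ, (1 - t) * (a + (a - a) * s) - a / (1 + a) = -a * (t - a / (1 + a)) := by
    intro s t
    field_simp
    ring
  simp only [Prod.dist_eq, opT, Real.dist_eq]
  rw [show (1 - x.2) * (a + (a - a) * x.1) - a / (1 + a) = -a * (x.2 - a / (1 + a)) from key x.1 x.2,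
    show (1 - x.1) * (a + (a - a) * x.2) - a / (1 + a) = -a * (x.1 - a / (1 + a)) from key x.2 x.1,
    abs_mul, abs_mul, abs_neg, abs_of_nonneg ha0, max_comm]
  rw [mul_max_of_nonneg _ _ ha0]

/-- If `a = b` and `0 ≤ a < 1`, every trajectory of the symmetric operator `T`
starting in `[0,1]²` converges to `(a/(1+a), a/(1+a))`. -/
theorem opT_sym_limit_eq_case (a b : ℝ) (hab : a = b) (ha0 : 0 ≤ a) (ha1 : a < 1)
    (p : ℝ × ℝ) (hp : p ∈ Set.Icc (0 : ℝ) 1 ×ˢ Set.Icc (0 : ℝ) 1) :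
    Tendsto (fun n : ℕ => (opT a b)^[n] p) atTop (𝓝 (a / (1 + a), a / (1 + a))) := by
  subst hab
  set q : ℝ × ℝ := (a / (1 + a), a / (1 + a)) with hq
  have hdist : ∀ n : ℕ, dist ((opT a a)^[n] p) q = a ^ n * dist p q := by
    intro n
    induction n with
    | zero => simp
    | succ n ih =>
      rw [Function.iterate_succ_apply', opT_dist_eq a ha0 ha1, ih, pow_succ]
      ring
  rw [tendsto_iff_dist_tendsto_zero]
  simp only [hdist]
  have : Tendsto (fun n : ℕ => a ^ n * dist p q) atTop (𝓝 (0 * dist p q)) :=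
    (tendsto_pow_atTop_nhds_zero_of_lt_one ha0 ha1).mul_const _
  simpa using this
end

section
/- Let a,b ∈ [0,1] with b ≠ 1, a ≠ b and 0 ≤ a < 1 − (1−b)²/4, and let x_* = (1−b+2a−√((1−b)²+4a)) / (2(a−b)) be the unique fixed point coordinate of the symmetric operator T. Then there exists an open neighborhood U of (x_*, x_*) in [0,1]² such that for every initial point (x^{(0)},y^{(0)}) ∈ U, lim_{n→∞} T^n(x^{(0)},y^{(0)}) = (x_*, x_*). -/
open Filter Topology

/-- If `b ≠ 1`, `a ≠ b` and `0 ≤ a < 1 − (1−b)²/4`, then the fixed point `(x₀,x₀)`,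
`x₀ = (1−b+2a−√((1−b)²+4a))/(2(a−b))`, attracts a neighborhood of itself in `[0,1]²`. -/
theorem opT_sym_attracting_fixed_point (a b : ℝ) (ha : a ∈ Set.Icc (0 : ℝ) 1)
    (hb : b ∈ Set.Icc (0 : ℝ) 1) (hb1 : b ≠ 1) (hab : a ≠ b)
    (ha2 : a < 1 - (1 - b) ^ 2 / 4) :
    ∃ U : Set (ℝ × ℝ), IsOpen U ∧
      ((1 - b + 2 * a - Real.sqrt ((1 - b) ^ 2 + 4 * a)) / (2 * (a - b)),
        (1 - b + 2 * a - Real.sqrt ((1 - b) ^ 2 + 4 * a)) / (2 * (a - b))) ∈ U ∧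
      ∀ p ∈ U ∩ Set.Icc (0 : ℝ) 1 ×ˢ Set.Icc (0 : ℝ) 1,
        Tendsto (fun n : ℕ => (opT a b)^[n] p) atTop
          (𝓝 ((1 - b + 2 * a - Real.sqrt ((1 - b) ^ 2 + 4 * a)) / (2 * (a - b)),
            (1 - b + 2 * a - Real.sqrt ((1 - b) ^ 2 + 4 * a)) / (2 * (a - b)))) := by
  obtain ⟨ha0, ha1⟩ := ha
  obtain ⟨hb0, hb1'⟩ := hb
  have hblt : b < 1 := lt_of_le_of_ne hb1' hb1
  have hab' : a - b ≠ 0 := sub_ne_zero.mpr hab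
  set D := Real.sqrt ((1 - b) ^ 2 + 4 * a) with hDdef
  set x₀ := (1 - b + 2 * a - D) / (2 * (a - b)) with hx₀
  have hD2 : D ^ 2 = (1 - b) ^ 2 + 4 * a := Real.sq_sqrt (by positivity)
  have hDpos : 0 < D := Real.sqrt_pos.mpr (by nlinarith)
  have hDlt2 : D < 2 := by
    nlinarith [Real.sqrt_nonneg ((1 - b) ^ 2 + 4 * a), hD2]
  have hK : 2 * (a - b) * x₀ = 1 - b + 2 * a - D := by
    rw [hx₀]; field_simp
  have hfix : (1 - x₀) * (a + (b - a) * x₀) = x₀ := by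
    have h4 : 4 * (a - b) ^ 2 * ((1 - x₀) * (a + (b - a) * x₀) - x₀) = 0 := by
      linear_combination (a - b) * hD2 + ((a - b) * (2 * (a - b) * x₀ - (1 - b + 2 * a) - D)) * hK
    rcases mul_eq_zero.mp h4 with h | h
    · exact absurd h (by positivity)
    · linarith
  have hc : (1 - x₀) * (b - a) - (a + (b - a) * x₀) = 1 - D := by linear_combination hK
  have stepq : ∀ p : ℝ × ℝ, (opT a b p).1 - (opT a b p).2 = b * (p.1 - p.2) := by
    intro p; simp only [opT]; ring
  have steps : ∀ p : ℝ × ℝ, (opT a b p).1 + (opT a b p).2 - 2 * x₀ =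
      (1 - D) * (p.1 + p.2 - 2 * x₀)
        - (b - a) * ((p.1 + p.2 - 2 * x₀) ^ 2 - (p.1 - p.2) ^ 2) / 2 := by
    intro p; simp only [opT]
    linear_combination 2 * hfix + (p.1 + p.2 - 2 * x₀) * hc
  set k0 : ℝ := max |1 - D| b with hk0
  have hk0lt : k0 < 1 := max_lt (abs_lt.mpr ⟨by linarith, by linarith⟩) hblt
  have hk0nn : 0 ≤ k0 := le_trans hb0 (le_max_right _ _)
  set δ : ℝ := (1 - k0) / (|b - a| + 1) with hδ
  have habs : (0:ℝ) ≤ |b - a| := abs_nonneg _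
  have hδpos : 0 < δ := by
    apply div_pos (by linarith) (by linarith)
  set k : ℝ := k0 + |b - a| * δ / 2 with hk
  have hklt : k < 1 := by
    have h1 : |b - a| * δ ≤ 1 - k0 := by
      rw [hδ, mul_div_assoc']
      rw [div_le_iff₀ (by linarith)]
      nlinarith
    simp only [hk]; linarith
  have hknn : 0 ≤ k := by
    have : 0 ≤ |b - a| * δ / 2 := by positivity
    simp only [hk]; linarith
  -- contraction step in the (s,q) coordinates
  have stepM : ∀ p : ℝ × ℝ, max |p.1 + p.2 - 2 * x₀| |p.1 - p.2| ≤ δ →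
      max |(opT a b p).1 + (opT a b p).2 - 2 * x₀| |(opT a b p).1 - (opT a b p).2|
        ≤ k * max |p.1 + p.2 - 2 * x₀| |p.1 - p.2| := by
    intro p hM
    set s := p.1 + p.2 - 2 * x₀ with hs'
    set q := p.1 - p.2 with hq'
    set M := max |s| |q| with hM'
    have hs : |s| ≤ M := le_max_left _ _
    have hq : |q| ≤ M := le_max_right _ _
    have hMnn : 0 ≤ M := le_trans (abs_nonneg _) hs
    have hs2 : s ^ 2 ≤ M ^ 2 := by
      rw [← sq_abs s]; exact pow_le_pow_left₀ (abs_nonneg s) hs 2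
    have hq2 : q ^ 2 ≤ M ^ 2 := by
      rw [← sq_abs q]; exact pow_le_pow_left₀ (abs_nonneg q) hq 2
    have hsq : |s ^ 2 - q ^ 2| ≤ M ^ 2 := by
      rw [abs_le]
      exact ⟨by linarith [sq_nonneg s, sq_nonneg q], by linarith [sq_nonneg s, sq_nonneg q]⟩
    apply max_le
    · rw [steps p, ← hs', ← hq']
      calc |(1 - D) * s - (b - a) * (s ^ 2 - q ^ 2) / 2|
          ≤ |(1 - D) * s| + |(b - a) * (s ^ 2 - q ^ 2) / 2| := abs_sub _ _
        _ = |1 - D| * |s| + |b - a| * |s ^ 2 - q ^ 2| / 2 := by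
            rw [abs_mul, abs_div, abs_mul]; norm_num
        _ ≤ k0 * M + |b - a| * (δ * M) / 2 := by
            have h1 : |1 - D| * |s| ≤ k0 * M :=
              mul_le_mul (le_max_left _ _) hs (abs_nonneg _) hk0nn
            have h2 : |s ^ 2 - q ^ 2| ≤ δ * M := by
              have := mul_le_mul_of_nonneg_right hM hMnn
              calc |s ^ 2 - q ^ 2| ≤ M ^ 2 := hsq
                _ = M * M := sq M
                _ ≤ δ * M := this
            have h3 : |b - a| * |s ^ 2 - q ^ 2| ≤ |b - a| * (δ * M) :=
              mul_le_mul_of_nonneg_left h2 habs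
            linarith
        _ = k * M := by rw [hk]; ring
    · rw [stepq p, ← hq', abs_mul, abs_of_nonneg hb0]
      have : b * |q| ≤ k0 * M :=
        mul_le_mul (le_max_right _ _) hq (abs_nonneg _) hk0nn
      have h4 : 0 ≤ |b - a| * δ / 2 * M := by positivity
      simp only [hk]; linarith
  refine ⟨Metric.ball x₀ (δ / 2) ×ˢ Metric.ball x₀ (δ / 2),
    Metric.isOpen_ball.prod Metric.isOpen_ball,
    Set.mem_prod.mpr ⟨Metric.mem_ball_self (by linarith), Metric.mem_ball_self (by linarith)⟩,
    ?_⟩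
  rintro p ⟨hpU, -⟩
  obtain ⟨hp1, hp2⟩ := Set.mem_prod.mp hpU
  rw [Metric.mem_ball, Real.dist_eq] at hp1 hp2
  set f : ℕ → ℝ × ℝ := fun n => (opT a b)^[n] p with hf
  set Mn : ℕ → ℝ := fun n => max |(f n).1 + (f n).2 - 2 * x₀| |(f n).1 - (f n).2| with hMn
  have hM0 : Mn 0 ≤ δ := by
    simp only [hMn, hf, Function.iterate_zero_apply]
    apply max_le
    · calc |p.1 + p.2 - 2 * x₀| ≤ |p.1 - x₀| + |p.2 - x₀| := by
            have := abs_add_le (p.1 - x₀) (p.2 - x₀)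
            calc |p.1 + p.2 - 2 * x₀| = |(p.1 - x₀) + (p.2 - x₀)| := by ring_nf
              _ ≤ |p.1 - x₀| + |p.2 - x₀| := abs_add_le _ _
        _ ≤ δ := by linarith
    · calc |p.1 - p.2| = |(p.1 - x₀) - (p.2 - x₀)| := by ring_nf
        _ ≤ |p.1 - x₀| + |p.2 - x₀| := abs_sub _ _
        _ ≤ δ := by linarith
  have hbound : ∀ n, Mn n ≤ k ^ n * δ := by
    intro n
    induction n with
    | zero => simpa using hM0
    | succ n ih =>
      have hkpow : k ^ n ≤ 1 := pow_le_one₀ hknn hklt.le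
      have h1 : Mn n ≤ δ := le_trans ih (by
        have := mul_le_mul_of_nonneg_right hkpow hδpos.le
        linarith)
      have h2 := stepM (f n) h1
      have h3 : Mn (n + 1) ≤ k * Mn n := by
        simpa only [hMn, hf, Function.iterate_succ_apply'] using h2
      calc Mn (n + 1) ≤ k * Mn n := h3
        _ ≤ k * (k ^ n * δ) := mul_le_mul_of_nonneg_left ih hknn
        _ = k ^ (n + 1) * δ := by ring
  have hdist : ∀ n, dist (f n) (x₀, x₀) ≤ k ^ n * δ := by
    intro n
    have hs : |(f n).1 + (f n).2 - 2 * x₀| ≤ k ^ n * δ :=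
      le_trans (le_max_left _ _) (hbound n)
    have hq : |(f n).1 - (f n).2| ≤ k ^ n * δ :=
      le_trans (le_max_right _ _) (hbound n)
    rw [Prod.dist_eq]
    rw [abs_le] at hs hq
    apply max_le <;> rw [Real.dist_eq, abs_le] <;>
      exact ⟨by linarith [hs.1, hs.2, hq.1, hq.2], by linarith [hs.1, hs.2, hq.1, hq.2]⟩
  rw [tendsto_iff_dist_tendsto_zero]
  apply squeeze_zero (fun n => dist_nonneg) hdist
  have := (tendsto_pow_atTop_nhds_zero_of_lt_one hknn hklt).mul_const δ
  simpa using this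
end
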